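/- Let (Ω, 𝒫) be a probability space, let S and T be measurable spaces, and let g : S × T → ℝ be a measurable function taking values in {0,1}. Let X₁, …, Xₙ be i.i.d. S-valued random variables with common law μ, let W₁, …, W_l be i.i.d. T-valued random variables with common law ν, and suppose the whole family (X₁,…,Xₙ, W₁,…,W_l) is jointly independent. Then for every δ ∈ (0,1), with probability at least 1 − δ, ∫_S ∫_T g(x,w) dν(w) dμ(x) < (1/(n·l)) · Σ_{j=1}^{n} Σ_{i=1}^{l} g(X_j, W_i) + √( log((n+1)/δ) / n ) · (√l + √n)/√l. -/

import Mathlib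

open MeasureTheory ProbabilityTheory

universe u

/-- The codomain family for the combined family of random variables indexed by `ι ⊕ κ`:
the first block takes values in `S`, the second in `T`. -/
def sumType (S T : Type u) {ι κ : Type*} : ι ⊕ κ → Type u
  | .inl _ => S
  | .inr _ => T

/-- The corresponding family of measurable space structures. -/
def sumMS {S T : Type u} {ι κ : Type*} (mS : MeasurableSpace S) (mT : MeasurableSpace T) :
    ∀ k : ι ⊕ κ, MeasurableSpace (sumType S T k)
  | .inl _ => mS
  | .inr _ => mT

/-- The combined family of random variables `(X₁, …, Xₙ, W₁, …, W_l)`. -/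
def sumFun {Ω : Type*} {S T : Type u} {ι κ : Type*} (X : ι → Ω → S) (W : κ → Ω → T) :
    ∀ k : ι ⊕ κ, Ω → sumType S T k
  | .inl j => X j
  | .inr i => W i

/-! ### Auxiliary real inequalities -/

lemma exp_aux {u : ℝ} (h0 : 0 ≤ u) (h1 : u ≤ 1) : Real.exp u ≤ 1 + u + u ^ 2 := by
  have h := Real.exp_bound (x := u) (by rw [abs_of_nonneg h0]; exact h1) (n := 2) (by norm_num)
  have h2 : ∑ i ∈ Finset.range 2, u ^ i / i.factorial = 1 + u := by
    simp [Finset.sum_range_succ]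
  rw [h2] at h
  have := abs_le.1 h
  have h3 : |u| ^ 2 * ((2:ℕ).succ / ((2:ℕ).factorial * 2)) = u ^ 2 * (3/4) := by
    rw [abs_of_nonneg h0]; norm_num [Nat.factorial]
  nlinarith [sq_nonneg u, this.2]

lemma exp_sub_exp_neg {u : ℝ} (h0 : 0 ≤ u) : 2 * u ≤ Real.exp u - Real.exp (-u) := by
  have := (Real.self_le_sinh_iff (x := u)).2 h0
  rw [Real.sinh_eq] at this
  linarith

lemma key_ineq {p t : ℝ} (hp0 : 0 ≤ p) (ht0 : 0 ≤ t) (ht2 : t ≤ 2) :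
    Real.exp (t * p) * (1 - p + p * Real.exp (-t)) ≤ Real.exp (t ^ 2 / 4) := by
  set u : ℝ := t / 2 with hu
  have hu0 : 0 ≤ u := by positivity
  have hu1 : u ≤ 1 := by rw [hu]; linarith
  set A : ℝ := Real.exp u with hA
  set B : ℝ := Real.exp (-u) with hB
  have hAB : A * B = 1 := by rw [hA, hB, ← Real.exp_add]; simp
  have hApos : 0 < A := Real.exp_pos _
  have hBpos : 0 < B := Real.exp_pos _
  have hsinh : 2 * u ≤ A - B := exp_sub_exp_neg hu0
  have hexpA : A ≤ 1 + u + u ^ 2 := exp_aux hu0 hu1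
  set μ₀ : ℝ := p - 1/2 with hμ₀
  have lhs_eq : Real.exp (t * p) * (1 - p + p * Real.exp (-t))
      = Real.exp (t * μ₀) * ((1/2 - μ₀) * A + (1/2 + μ₀) * B) := by
    have key1 : Real.exp (t * μ₀) * A = Real.exp (t * p) := by
      rw [hA, ← Real.exp_add]; congr 1; rw [hμ₀, hu]; ring
    have key2 : Real.exp (t * μ₀) * B = Real.exp (t * p) * Real.exp (-t) := by
      rw [hB, ← Real.exp_add, ← Real.exp_add]; congr 1; rw [hμ₀, hu]; ring
    have hp' : (1/2 : ℝ) + μ₀ = p := by rw [hμ₀]; ring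
    have hq' : (1/2 : ℝ) - μ₀ = 1 - p := by rw [hμ₀]; ring
    have e1 : Real.exp (t * p) * (1 - p) = Real.exp (t * μ₀) * ((1/2 - μ₀) * A) := by
      rw [hq', ← key1]; ring
    have e2 : Real.exp (t * p) * (p * Real.exp (-t)) = Real.exp (t * μ₀) * ((1/2 + μ₀) * B) := by
      rw [hp', ← mul_assoc, mul_comm (Real.exp (t*p)) p, mul_assoc, ← key2]; ring
    calc Real.exp (t * p) * (1 - p + p * Real.exp (-t))
        = Real.exp (t * p) * (1 - p) + Real.exp (t * p) * (p * Real.exp (-t)) := by ring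
      _ = Real.exp (t * μ₀) * ((1/2 - μ₀) * A + (1/2 + μ₀) * B) := by rw [e1, e2]; ring
  rw [lhs_eq]
  have step1 : (1/2 - μ₀) * A + (1/2 + μ₀) * B
      ≤ Real.exp ((1/2 - μ₀) * A + (1/2 + μ₀) * B - 1) := by
    have := Real.add_one_le_exp ((1/2 - μ₀) * A + (1/2 + μ₀) * B - 1)
    linarith
  have hfac_nonneg : 0 ≤ Real.exp (t * μ₀) := (Real.exp_pos _).le
  have step2 : Real.exp (t * μ₀) * ((1/2 - μ₀) * A + (1/2 + μ₀) * B)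
      ≤ Real.exp (t * μ₀ + ((1/2 - μ₀) * A + (1/2 + μ₀) * B - 1)) := by
    rw [Real.exp_add]
    exact mul_le_mul_of_nonneg_left step1 hfac_nonneg
  refine step2.trans (Real.exp_le_exp.2 ?_)
  have hμlb : -(1/2 : ℝ) ≤ μ₀ := by rw [hμ₀]; linarith
  have hc : t - (A - B) ≤ 0 := by
    have h2u : 2 * u = t := by rw [hu]; ring
    linarith [hsinh, h2u.ge, h2u.le]
  have hmul : μ₀ * (t - (A - B)) ≤ (1/2) * ((A - B) - t) := by
    nlinarith
  have hre : t * μ₀ + ((1/2 - μ₀) * A + (1/2 + μ₀) * B - 1)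
      = (A + B) / 2 - 1 + μ₀ * (t - (A - B)) := by ring
  rw [hre]
  have h2u : t = 2 * u := by rw [hu]; ring
  have hfin : (A + B) / 2 - 1 + (1/2) * ((A - B) - t) = A - 1 - u := by rw [h2u]; ring
  have hsq : A - 1 - u ≤ u ^ 2 := by linarith
  have husq : u ^ 2 = t ^ 2 / 4 := by rw [h2u]; ring
  linarith

/-! ### Integrability helper -/

lemma integrable_of_bound {Ω : Type*} {mΩ : MeasurableSpace Ω} (P : Measure Ω)
    [IsFiniteMeasure P] (f : Ω → ℝ) (C : ℝ) (hm : Measurable f) (hb : ∀ ω, |f ω| ≤ C) :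
    Integrable f P :=
  (integrable_const C).mono' hm.aestronglyMeasurable (ae_of_all _ fun ω => by
    simpa using hb ω)

/-! ### A Hoeffding-type bound for [0,1]-valued i.i.d.-mean random variables -/

section Hoeffding
variable {Ω : Type*} {mΩ : MeasurableSpace Ω} (P : Measure Ω) [IsProbabilityMeasure P]

lemma mgf_bound (Y : Ω → ℝ) (hY : Measurable Y) (h0 : ∀ ω, 0 ≤ Y ω) (h1 : ∀ ω, Y ω ≤ 1)
    {p t : ℝ} (hp : ∫ y, Y y ∂P = p) (ht0 : 0 ≤ t) (ht2 : t ≤ 2) :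
    mgf (fun ω => p - Y ω) P t ≤ Real.exp (t ^ 2 / 4) := by
  have hp0 : 0 ≤ p := hp ▸ integral_nonneg fun ω => h0 ω
  have hintY : Integrable Y P :=
    integrable_of_bound P Y 1 hY fun ω => abs_le.2 ⟨by linarith [h0 ω], h1 ω⟩
  have hmE : Measurable fun ω => Real.exp (-t * Y ω) :=
    (Real.measurable_exp.comp ((hY.const_mul (-t)) : Measurable fun ω => -t * Y ω))
  have hintE : Integrable (fun ω => Real.exp (-t * Y ω)) P := by
    refine integrable_of_bound P _ (Real.exp |t|) hmE fun ω => ?_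
    rw [abs_of_nonneg (Real.exp_nonneg _)]
    apply Real.exp_le_exp.2
    calc -t * Y ω ≤ |(-t) * Y ω| := le_abs_self _
      _ = |t| * |Y ω| := by rw [abs_mul, abs_neg]
      _ ≤ |t| * 1 := by
          apply mul_le_mul_of_nonneg_left _ (abs_nonneg t)
          rw [abs_of_nonneg (h0 ω)]; exact h1 ω
      _ = |t| := mul_one _
  have hptw : ∀ ω, Real.exp (-t * Y ω) ≤ 1 - Y ω + Y ω * Real.exp (-t) := by
    intro ω
    have ha : (0:ℝ) ≤ 1 - Y ω := by linarith [h1 ω]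
    have hab : (1 - Y ω) + Y ω = 1 := by ring
    have hc := convexOn_exp.2 (Set.mem_univ (0:ℝ)) (Set.mem_univ (-t)) ha (h0 ω) hab
    simp only [smul_eq_mul, mul_zero, Real.exp_zero, mul_one, zero_add] at hc
    have heq : Y ω * -t = -t * Y ω := by ring
    rw [heq] at hc
    linarith [hc]
  have hEle : ∫ ω, Real.exp (-t * Y ω) ∂P ≤ 1 - p + p * Real.exp (-t) := by
    have hrw : ∀ ω, (1:ℝ) - Y ω + Y ω * Real.exp (-t) = 1 + Y ω * (Real.exp (-t) - 1) := by
      intro ω; ring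
    have hrhs : Integrable (fun ω => 1 + Y ω * (Real.exp (-t) - 1)) P :=
      (integrable_const 1).add (hintY.mul_const _)
    calc ∫ ω, Real.exp (-t * Y ω) ∂P
        ≤ ∫ ω, (1 + Y ω * (Real.exp (-t) - 1)) ∂P := by
          refine integral_mono hintE hrhs fun ω => ?_
          rw [← hrw ω]; exact hptw ω
      _ = 1 - p + p * Real.exp (-t) := by
          rw [integral_add (integrable_const 1) (hintY.mul_const _),
            integral_mul_const, integral_const, hp]
          simp; ring
  have hmgf : mgf (fun ω => p - Y ω) P t
      = Real.exp (t * p) * ∫ ω, Real.exp (-t * Y ω) ∂P := by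
    rw [mgf, ← integral_const_mul]
    refine integral_congr_ae (ae_of_all _ fun ω => ?_)
    simp only
    rw [← Real.exp_add]
    congr 1
    ring
  rw [hmgf]
  calc Real.exp (t * p) * ∫ ω, Real.exp (-t * Y ω) ∂P
      ≤ Real.exp (t * p) * (1 - p + p * Real.exp (-t)) :=
        mul_le_mul_of_nonneg_left hEle (Real.exp_nonneg _)
    _ ≤ Real.exp (t ^ 2 / 4) := key_ineq hp0 ht0 ht2

lemma hoeff_tail (k : ℕ) (hk : 0 < k) (Y : Fin k → Ω → ℝ) (hYm : ∀ i, Measurable (Y i))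
    (hind : iIndepFun (m := fun _ => Real.measurableSpace) Y P)
    (h0 : ∀ i ω, 0 ≤ Y i ω) (h1 : ∀ i ω, Y i ω ≤ 1)
    {p : ℝ} (hp : ∀ i, ∫ y, Y i y ∂P = p) {ε : ℝ} (hε : 0 < ε) :
    P {ω | ε ≤ p - (k : ℝ)⁻¹ * ∑ i, Y i ω} ≤ ENNReal.ofReal (Real.exp (-((k : ℝ) * ε ^ 2))) := by
  have hkpos : (0 : ℝ) < k := Nat.cast_pos.2 hk
  have i0 : Fin k := ⟨0, hk⟩
  have hp0 : 0 ≤ p := (hp i0) ▸ integral_nonneg fun ω => h0 i0 ω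
  have hintY : ∀ i, Integrable (Y i) P := fun i =>
    integrable_of_bound P (Y i) 1 (hYm i) fun ω => abs_le.2 ⟨by linarith [h0 i ω], h1 i ω⟩
  have hp1 : p ≤ 1 := by
    rw [← hp i0]
    calc ∫ y, Y i0 y ∂P ≤ ∫ _, (1:ℝ) ∂P :=
        integral_mono (hintY i0) (integrable_const 1) fun ω => h1 i0 ω
      _ = 1 := by simp
  by_cases hε1 : ε ≤ 1
  · set t : ℝ := 2 * ε with ht_def
    have ht0 : 0 ≤ t := by positivity
    have ht2 : t ≤ 2 := by rw [ht_def]; linarith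
    set Z : Fin k → Ω → ℝ := fun i ω => p - Y i ω with hZ
    have hZm : ∀ i, Measurable (Z i) := fun i => measurable_const.sub (hYm i)
    have hindZ : iIndepFun (m := fun _ => Real.measurableSpace) Z P := by
      have := hind.comp (fun _ (y : ℝ) => p - y) fun _ => measurable_const.sub measurable_id
      exact this
    set Xs : Ω → ℝ := fun ω => ∑ i, Z i ω with hXs
    have hXsfun : Xs = ∑ i, Z i := by
      funext ω; rw [Finset.sum_apply]
    have hXsval : ∀ ω, Xs ω = (k : ℝ) * p - ∑ i, Y i ω := by
      intro ω
      simp only [hXs, hZ, Finset.sum_sub_distrib, Finset.sum_const, Finset.card_univ,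
        Fintype.card_fin, nsmul_eq_mul]
    have hXsm : Measurable Xs := by
      exact Finset.measurable_sum _ fun i _ => hZm i
    have hXsb : ∀ ω, |Xs ω| ≤ (k : ℝ) := by
      intro ω
      calc |Xs ω| ≤ ∑ i : Fin k, |Z i ω| := Finset.abs_sum_le_sum_abs _ _
        _ ≤ ∑ _i : Fin k, (1:ℝ) := Finset.sum_le_sum fun i _ => by
            rw [hZ]; exact abs_le.2 ⟨by simp only; linarith [h1 i ω], by simp only; linarith [h0 i ω]⟩
        _ = (k : ℝ) := by simp
    have h_int : Integrable (fun ω => Real.exp (t * Xs ω)) P := by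
      refine integrable_of_bound P _ (Real.exp (t * k)) (Real.measurable_exp.comp (hXsm.const_mul t))
        fun ω => ?_
      rw [abs_of_nonneg (Real.exp_nonneg _)]
      apply Real.exp_le_exp.2
      calc t * Xs ω ≤ |t * Xs ω| := le_abs_self _
        _ = t * |Xs ω| := by rw [abs_mul, abs_of_nonneg ht0]
        _ ≤ t * k := mul_le_mul_of_nonneg_left (hXsb ω) ht0
    have hset : {ω | ε ≤ p - (k : ℝ)⁻¹ * ∑ i, Y i ω} = {ω | (k : ℝ) * ε ≤ Xs ω} := by
      ext ω
      simp only [Set.mem_setOf_eq, hXsval ω]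
      have h2 : (k:ℝ) * ((k:ℝ)⁻¹ * ∑ i, Y i ω) = ∑ i, Y i ω := by
        rw [← mul_assoc, mul_inv_cancel₀ hkpos.ne', one_mul]
      constructor
      · intro h
        nlinarith [mul_le_mul_of_nonneg_left h hkpos.le]
      · intro h
        have h3 : (k:ℝ) * (p - (k:ℝ)⁻¹ * ∑ i, Y i ω - ε) = ((k:ℝ)*p - ∑ i, Y i ω) - (k:ℝ)*ε := by
          rw [mul_sub, mul_sub, h2]
        nlinarith [h3]
    rw [hset]
    have hmarkov := measure_ge_le_exp_mul_mgf (X := Xs) (μ := P) ((k : ℝ) * ε) ht0 h_int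
    have hmgf_sum : mgf Xs P t = ∏ i, mgf (Z i) P t := by
      rw [hXsfun]; exact hindZ.mgf_sum hZm Finset.univ
    have hprod : ∏ i, mgf (Z i) P t ≤ Real.exp (t ^ 2 / 4) ^ k := by
      calc ∏ i, mgf (Z i) P t ≤ ∏ _i : Fin k, Real.exp (t ^ 2 / 4) :=
          Finset.prod_le_prod (fun i _ => mgf_nonneg) fun i _ =>
            mgf_bound P (Y i) (hYm i) (h0 i) (h1 i) (hp i) ht0 ht2
        _ = Real.exp (t ^ 2 / 4) ^ k := by simp
    have hfinal : Real.exp (-t * ((k:ℝ) * ε)) * mgf Xs P t ≤ Real.exp (-((k:ℝ) * ε ^ 2)) := by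
      rw [hmgf_sum]
      calc Real.exp (-t * ((k:ℝ) * ε)) * ∏ i, mgf (Z i) P t
          ≤ Real.exp (-t * ((k:ℝ) * ε)) * Real.exp (t ^ 2 / 4) ^ k :=
            mul_le_mul_of_nonneg_left hprod (Real.exp_nonneg _)
        _ = Real.exp (-t * ((k:ℝ) * ε) + (k:ℝ) * (t ^ 2/4)) := by
            rw [← Real.exp_nat_mul, ← Real.exp_add]
        _ = Real.exp (-((k:ℝ) * ε ^ 2)) := by
            congr 1
            rw [ht_def]; ring
    have hP : (P {ω | (k : ℝ) * ε ≤ Xs ω}).toReal ≤ Real.exp (-((k:ℝ) * ε ^ 2)) :=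
      hmarkov.trans hfinal
    rw [← ENNReal.ofReal_toReal (measure_ne_top P _)]
    exact ENNReal.ofReal_le_ofReal hP
  · push_neg at hε1
    have hempty : {ω | ε ≤ p - (k : ℝ)⁻¹ * ∑ i, Y i ω} = ∅ := by
      rw [Set.eq_empty_iff_forall_notMem]
      intro ω hω
      simp only [Set.mem_setOf_eq] at hω
      have hs : 0 ≤ (k : ℝ)⁻¹ * ∑ i, Y i ω := by
        apply mul_nonneg (by positivity)
        exact Finset.sum_nonneg fun i _ => h0 i ω
      linarith
    rw [hempty]
    simp
end Hoeffding

/-! ### Product measure facts -/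

lemma map_eval_pi {ι : Type*} [Fintype ι] {α : Type u} [mα : MeasurableSpace α]
    (μ : Measure α) [IsProbabilityMeasure μ] (i : ι) :
    Measure.map (Function.eval i) (Measure.pi fun _ : ι => μ) = μ := by
  classical
  ext s hs
  rw [Measure.map_apply (measurable_pi_apply i) hs, Set.eval_preimage, Measure.pi_pi]
  rw [Finset.prod_eq_single i]
  · simp
  · intro j _ hj
    simp [Function.update_of_ne hj]
  · simp

lemma pi_eval_preimage_meas {ι : Type*} [Fintype ι] {α : Type u} [mα : MeasurableSpace α]
    (μ : Measure α) [IsProbabilityMeasure μ] (i : ι) {s : Set α} (hs : MeasurableSet s) :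
    (Measure.pi fun _ : ι => μ) (Function.eval i ⁻¹' s) = μ s := by
  rw [← Measure.map_apply (measurable_pi_apply i) hs, map_eval_pi]

lemma integral_eval_pi {ι : Type*} [Fintype ι] {α : Type u} [mα : MeasurableSpace α]
    (μ : Measure α) [IsProbabilityMeasure μ] (i : ι) (f : α → ℝ) (hf : Measurable f) :
    ∫ x, f (x i) ∂(Measure.pi fun _ : ι => μ) = ∫ a, f a ∂μ := by
  have h : ∫ a, f a ∂μ = ∫ a, f a ∂(Measure.map (Function.eval i) (Measure.pi fun _ : ι => μ)) := by
    rw [map_eval_pi]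
  rw [h, integral_map (measurable_pi_apply i).aemeasurable hf.aestronglyMeasurable]

lemma iIndepFun_pi {ι : Type*} [Fintype ι] {α : Type u} [mα : MeasurableSpace α]
    (μ : Measure α) [IsProbabilityMeasure μ] :
    iIndepFun (m := fun _ : ι => mα) (fun i (x : ι → α) => x i) (Measure.pi fun _ : ι => μ) := by
  classical
  rw [iIndepFun_iff_measure_inter_preimage_eq_mul]
  intro S sets H
  have hinter : (⋂ i ∈ S, (fun x : ι → α => x i) ⁻¹' sets i)
      = Set.pi Set.univ (fun i => if i ∈ S then sets i else Set.univ) := by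
    ext x
    simp only [Set.mem_iInter, Set.mem_preimage, Set.mem_pi, Set.mem_univ, true_implies]
    constructor
    · intro hx i
      split_ifs with h
      · exact hx i h
      · exact Set.mem_univ _
    · intro hx i hi
      have := hx i
      rwa [if_pos hi] at this
  rw [hinter, Measure.pi_pi]
  have hμ : ∀ i, μ (if i ∈ S then sets i else Set.univ) = if i ∈ S then μ (sets i) else 1 := by
    intro i; split <;> simp
  rw [Finset.prod_congr rfl fun i _ => hμ i, Finset.prod_ite_mem, Finset.univ_inter]
  exact Finset.prod_congr rfl fun i hi =>
    (pi_eval_preimage_meas μ i (H i hi)).symm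

/-! ### The joint law -/

lemma joint_law {Ω : Type*} {S T : Type u} [MeasureSpace Ω]
    [mS : MeasurableSpace S] [mT : MeasurableSpace T]
    (μ : Measure S) (ν : Measure T) [IsProbabilityMeasure μ] [IsProbabilityMeasure ν]
    (n l : ℕ) (X : Fin n → Ω → S) (W : Fin l → Ω → T)
    (hXm : ∀ j, Measurable (X j)) (hWm : ∀ i, Measurable (W i))
    (hXlaw : ∀ j, Measure.map (X j) ℙ = μ)
    (hWlaw : ∀ i, Measure.map (W i) ℙ = ν)
    (hindep : iIndepFun (m := sumMS mS mT) (sumFun X W) ℙ) :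
    Measure.map (fun ω => ((fun j => X j ω, fun i => W i ω) : (Fin n → S) × (Fin l → T))) ℙ
      = (Measure.pi fun _ : Fin n => μ).prod (Measure.pi fun _ : Fin l => ν) := by
  letI instMS : ∀ k : Fin n ⊕ Fin l, MeasurableSpace (sumType S T k) := sumMS mS mT
  set D : ∀ k : Fin n ⊕ Fin l, Measure (sumType S T k) :=
    fun k => match k with
      | .inl _ => μ
      | .inr _ => ν with hD
  haveI hDprob : ∀ k, IsProbabilityMeasure (D k) := by
    intro k; cases k
    · exact inferInstanceAs (IsProbabilityMeasure μ)
    · exact inferInstanceAs (IsProbabilityMeasure ν)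
  set F : Ω → ∀ k : Fin n ⊕ Fin l, sumType S T k := fun ω k => sumFun X W k ω with hF
  have hFm : Measurable F := by
    apply measurable_pi_lambda
    intro k
    cases k with
    | inl j => exact hXm j
    | inr i => exact hWm i
  have hlawF : Measure.map F ℙ = Measure.pi D := by
    refine (Measure.pi_eq fun s hs => ?_).symm
    rw [Measure.map_apply hFm (MeasurableSet.univ_pi hs)]
    have hpre : F ⁻¹' (Set.pi Set.univ s) = ⋂ k ∈ (Finset.univ : Finset (Fin n ⊕ Fin l)),
        (sumFun X W k) ⁻¹' s k := by
      ext ω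
      simp [hF, Set.mem_pi]
    rw [hpre, hindep.measure_inter_preimage_eq_mul Finset.univ (fun k _ => hs k)]
    refine Finset.prod_congr rfl fun k _ => ?_
    cases k with
    | inl j =>
        show ℙ (X j ⁻¹' s (Sum.inl j)) = μ (s (Sum.inl j))
        rw [← Measure.map_apply (hXm j) (hs (Sum.inl j)), hXlaw j]
    | inr i =>
        show ℙ (W i ⁻¹' s (Sum.inr i)) = ν (s (Sum.inr i))
        rw [← Measure.map_apply (hWm i) (hs (Sum.inr i)), hWlaw i]
  have hequiv := (measurePreserving_sumPiEquivProdPi D).map_eq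
  have hcomp : (fun ω => ((fun j => X j ω, fun i => W i ω) : (Fin n → S) × (Fin l → T)))
      = (MeasurableEquiv.sumPiEquivProdPi (sumType S T)) ∘ F := rfl
  rw [hcomp]
  have hmm := Measure.map_map (μ := ℙ) (MeasurableEquiv.sumPiEquivProdPi (sumType S T)).measurable hFm
  rw [hlawF, hequiv] at hmm
  exact hmm.symm

/-- **Proposition 1 (confidence-interval formulation).** With probability at least `1 − δ`,
the expected value `∫∫ g dν dμ` is strictly below the empirical double average plus the excess term
`√(log((n+1)/δ)/n) · (√l+√n)/√l`. -/
theorem stmt1 {Ω : Type*} {S T : Type u} [MeasureSpace Ω]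
    [IsProbabilityMeasure (ℙ : Measure Ω)]
    [mS : MeasurableSpace S] [mT : MeasurableSpace T]
    (μ : Measure S) (ν : Measure T)
    (g : S × T → ℝ) (hg : Measurable g) (hg01 : ∀ p, g p = 0 ∨ g p = 1)
    (n l : ℕ) (hn : 0 < n) (hl : 0 < l)
    (X : Fin n → Ω → S) (W : Fin l → Ω → T)
    (hXm : ∀ j, Measurable (X j)) (hWm : ∀ i, Measurable (W i))
    (hXlaw : ∀ j, Measure.map (X j) ℙ = μ)
    (hWlaw : ∀ i, Measure.map (W i) ℙ = ν)
    (hindep : iIndepFun (m := sumMS mS mT) (sumFun X W) ℙ)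
    (δ : ℝ) (hδ0 : 0 < δ) (hδ1 : δ < 1) :
    ENNReal.ofReal (1 - δ) ≤
      ℙ {ω | ∫ x, ∫ w, g (x, w) ∂ν ∂μ <
          (1 / ((n : ℝ) * l)) * ∑ j : Fin n, ∑ i : Fin l, g (X j ω, W i ω)
          + Real.sqrt (Real.log (((n : ℝ) + 1) / δ) / n)
              * ((Real.sqrt l + Real.sqrt n) / Real.sqrt l)} := by
  classical
  haveI : Nonempty (Fin n) := ⟨⟨0, hn⟩⟩
  haveI hμprob : IsProbabilityMeasure μ := by
    rw [← hXlaw ⟨0, hn⟩]; exact Measure.isProbabilityMeasure_map (hXm _).aemeasurable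
  haveI hνprob : IsProbabilityMeasure ν := by
    rw [← hWlaw ⟨0, hl⟩]; exact Measure.isProbabilityMeasure_map (hWm _).aemeasurable
  have hnpos : (0:ℝ) < n := Nat.cast_pos.2 hn
  have hlpos : (0:ℝ) < l := Nat.cast_pos.2 hl
  -- g is [0,1]-valued
  have hg0 : ∀ q, 0 ≤ g q := fun q => by rcases hg01 q with h | h <;> rw [h] <;> norm_num
  have hg1 : ∀ q, g q ≤ 1 := fun q => by rcases hg01 q with h | h <;> rw [h] <;> norm_num
  -- the conditional expectation h
  set h : S → ℝ := fun x => ∫ w, g (x, w) ∂ν with hh_def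
  have hh_meas : Measurable h :=
    (hg.stronglyMeasurable.integral_prod_right').measurable
  have hgx_meas : ∀ x, Measurable fun w => g (x, w) := fun x =>
    hg.comp measurable_prodMk_left
  have hgx_int : ∀ x, Integrable (fun w => g (x, w)) ν := fun x =>
    integrable_of_bound ν _ 1 (hgx_meas x) fun w => abs_le.2 ⟨by linarith [hg0 (x, w)], hg1 _⟩
  have hh0 : ∀ x, 0 ≤ h x := fun x => integral_nonneg fun w => hg0 _
  have hh1 : ∀ x, h x ≤ 1 := by
    intro x
    calc h x ≤ ∫ _, (1:ℝ) ∂ν := integral_mono (hgx_int x) (integrable_const 1) fun w => hg1 _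
      _ = 1 := by simp
  set m : ℝ := ∫ x, h x ∂μ with hm_def
  -- the deviation constants
  set L : ℝ := Real.log (((n : ℝ) + 1) / δ) with hL_def
  have hLpos : 0 < L := by
    apply Real.log_pos
    rw [lt_div_iff₀ hδ0]
    have : (1:ℝ) ≤ (n:ℝ) := by exact_mod_cast hn
    nlinarith
  set ε₁ : ℝ := Real.sqrt (L / n) with hε₁_def
  set ε₂ : ℝ := Real.sqrt (L / l) with hε₂_def
  have hε₁pos : 0 < ε₁ := Real.sqrt_pos.2 (by positivity)
  have hε₂pos : 0 < ε₂ := Real.sqrt_pos.2 (by positivity)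
  have hε₁sq : (n:ℝ) * ε₁ ^ 2 = L := by
    rw [hε₁_def, Real.sq_sqrt (by positivity : (0:ℝ) ≤ L / n)]
    field_simp
  have hε₂sq : (l:ℝ) * ε₂ ^ 2 = L := by
    rw [hε₂_def, Real.sq_sqrt (by positivity : (0:ℝ) ≤ L / l)]
    field_simp
  have hexpL : Real.exp (-L) = δ / ((n:ℝ) + 1) := by
    rw [hL_def, Real.exp_neg, Real.exp_log (by positivity), inv_div]
  -- the excess term decomposition
  have hexcess : ε₁ + ε₂ = Real.sqrt (L / n) * ((Real.sqrt l + Real.sqrt n) / Real.sqrt l) := by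
    have hsl : (0:ℝ) < Real.sqrt l := Real.sqrt_pos.2 hlpos
    have h1 : ε₁ * Real.sqrt n = Real.sqrt L := by
      rw [hε₁_def, ← Real.sqrt_mul (by positivity : (0:ℝ) ≤ L / n)]
      congr 1
      field_simp
    have h2 : ε₂ * Real.sqrt l = Real.sqrt L := by
      rw [hε₂_def, ← Real.sqrt_mul (by positivity : (0:ℝ) ≤ L / l)]
      congr 1
      field_simp
    rw [← hε₁_def]
    field_simp
    nlinarith [h1, h2]
  -- the product space and the bad events
  set μn : Measure (Fin n → S) := Measure.pi fun _ : Fin n => μ with hμn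
  set νl : Measure (Fin l → T) := Measure.pi fun _ : Fin l => ν with hνl
  set PP : Measure ((Fin n → S) × (Fin l → T)) := μn.prod νl with hPP
  set Bx : Set (Fin n → S) := {x | ε₁ ≤ m - (n:ℝ)⁻¹ * ∑ j, h (x j)} with hBx_def
  set B0 : Set ((Fin n → S) × (Fin l → T)) := Bx ×ˢ Set.univ with hB0_def
  set Bj : Fin n → Set ((Fin n → S) × (Fin l → T)) :=
    fun j => {v | ε₂ ≤ h (v.1 j) - (l:ℝ)⁻¹ * ∑ i, g (v.1 j, v.2 i)} with hBj_def
  set A : Set ((Fin n → S) × (Fin l → T)) :=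
    {v | m < (1 / ((n : ℝ) * l)) * ∑ j : Fin n, ∑ i : Fin l, g (v.1 j, v.2 i)
          + Real.sqrt (L / n) * ((Real.sqrt l + Real.sqrt n) / Real.sqrt l)} with hA_def
  -- measurability
  have hsum_meas : Measurable fun v : (Fin n → S) × (Fin l → T) =>
      ∑ j : Fin n, ∑ i : Fin l, g (v.1 j, v.2 i) := by
    apply Finset.measurable_sum
    intro j _
    apply Finset.measurable_sum
    intro i _
    exact hg.comp (((measurable_pi_apply j).comp measurable_fst).prodMk
      ((measurable_pi_apply i).comp measurable_snd))
  have hA_meas : MeasurableSet A := by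
    apply measurableSet_lt measurable_const
    exact ((hsum_meas.const_mul _).add_const _)
  have hBx_meas : MeasurableSet Bx := by
    apply measurableSet_le measurable_const
    apply Measurable.const_sub
    apply Measurable.const_mul
    exact Finset.measurable_sum _ fun j _ => hh_meas.comp (measurable_pi_apply j)
  have hB0_meas : MeasurableSet B0 := hBx_meas.prod MeasurableSet.univ
  have hBj_meas : ∀ j, MeasurableSet (Bj j) := by
    intro j
    apply measurableSet_le measurable_const
    apply Measurable.sub
    · exact hh_meas.comp ((measurable_pi_apply j).comp measurable_fst)
    · apply Measurable.const_mul
      apply Finset.measurable_sum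
      intro i _
      exact hg.comp (((measurable_pi_apply j).comp measurable_fst).prodMk
        ((measurable_pi_apply i).comp measurable_snd))
  -- bound on B0
  have hB0_bound : PP B0 ≤ ENNReal.ofReal (δ / ((n:ℝ) + 1)) := by
    have hprod : PP B0 = μn Bx := by
      rw [hPP, hB0_def, Measure.prod_prod, measure_univ, mul_one]
    rw [hprod]
    have := hoeff_tail (P := μn) n hn (fun j x => h (x j))
      (fun j => hh_meas.comp (measurable_pi_apply j))
      ((_root_.iIndepFun_pi μ).comp (fun _ => h) fun _ => hh_meas)
      (fun j x => hh0 _) (fun j x => hh1 _)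
      (p := m) (fun j => by rw [integral_eval_pi μ j h hh_meas]) hε₁pos
    calc μn Bx ≤ ENNReal.ofReal (Real.exp (-((n:ℝ) * ε₁ ^ 2))) := this
      _ = ENNReal.ofReal (δ / ((n:ℝ) + 1)) := by rw [hε₁sq, hexpL]
  -- bound on each Bj
  have hBj_bound : ∀ j, PP (Bj j) ≤ ENNReal.ofReal (δ / ((n:ℝ) + 1)) := by
    intro j
    have hsec : ∀ x : Fin n → S,
        νl (Prod.mk x ⁻¹' Bj j) ≤ ENNReal.ofReal (Real.exp (-((l:ℝ) * ε₂ ^ 2))) := by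
      intro x
      have := hoeff_tail (P := νl) l hl (fun i w => g (x j, w i))
        (fun i => (hgx_meas (x j)).comp (measurable_pi_apply i))
        ((_root_.iIndepFun_pi ν).comp (fun _ w => g (x j, w)) fun _ => hgx_meas (x j))
        (fun i w => hg0 _) (fun i w => hg1 _)
        (p := h (x j)) (fun i => by
          rw [integral_eval_pi ν i (fun w => g (x j, w)) (hgx_meas (x j))]) hε₂pos
      exact this
    calc PP (Bj j) = ∫⁻ x, νl (Prod.mk x ⁻¹' Bj j) ∂μn := by
          rw [hPP, Measure.prod_apply (hBj_meas j)]
      _ ≤ ∫⁻ _, ENNReal.ofReal (Real.exp (-((l:ℝ) * ε₂ ^ 2))) ∂μn :=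
          lintegral_mono fun x => hsec x
      _ = ENNReal.ofReal (Real.exp (-((l:ℝ) * ε₂ ^ 2))) := by
          rw [lintegral_const, measure_univ, mul_one]
      _ = ENNReal.ofReal (δ / ((n:ℝ) + 1)) := by rw [hε₂sq, hexpL]
  -- the bad set
  set Bad : Set ((Fin n → S) × (Fin l → T)) := B0 ∪ ⋃ j, Bj j with hBad_def
  have hBad_meas : MeasurableSet Bad := hB0_meas.union (MeasurableSet.iUnion hBj_meas)
  have hBad_bound : PP Bad ≤ ENNReal.ofReal δ := by
    calc PP Bad ≤ PP B0 + PP (⋃ j, Bj j) := measure_union_le _ _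
      _ ≤ PP B0 + ∑ j, PP (Bj j) := by
          gcongr
          exact measure_iUnion_fintype_le _ _
      _ ≤ ENNReal.ofReal (δ / ((n:ℝ) + 1)) + ∑ _j : Fin n, ENNReal.ofReal (δ / ((n:ℝ) + 1)) :=
          add_le_add hB0_bound (Finset.sum_le_sum fun j _ => hBj_bound j)
      _ = ENNReal.ofReal (δ / ((n:ℝ) + 1)) * ((n : ENNReal) + 1) := by
          rw [Finset.sum_const, Finset.card_univ, Fintype.card_fin, nsmul_eq_mul]
          ring
      _ = ENNReal.ofReal δ := by
          have hcast : ((n : ENNReal) + 1) = ENNReal.ofReal ((n:ℝ) + 1) := by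
            rw [ENNReal.ofReal_add (by positivity) zero_le_one, ENNReal.ofReal_one,
              ENNReal.ofReal_natCast]
          rw [hcast, ← ENNReal.ofReal_mul (by positivity)]
          congr 1
          field_simp
  -- complement of Bad is inside A
  have hsubset : Badᶜ ⊆ A := by
    intro v hv
    rw [hBad_def, Set.compl_union, Set.mem_inter_iff] at hv
    obtain ⟨hv0, hvj⟩ := hv
    have hv0' : m - (n:ℝ)⁻¹ * ∑ j, h (v.1 j) < ε₁ := by
      by_contra hcon
      push_neg at hcon
      exact hv0 (by
        rw [hB0_def]
        exact Set.mem_prod.2 ⟨hcon, Set.mem_univ _⟩)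
    have hvj' : ∀ j, h (v.1 j) - (l:ℝ)⁻¹ * ∑ i, g (v.1 j, v.2 i) < ε₂ := by
      intro j
      by_contra hcon
      push_neg at hcon
      rw [Set.mem_compl_iff] at hvj
      exact hvj (Set.mem_iUnion.2 ⟨j, hcon⟩)
    -- sum the per-index bounds
    have hsumlt : ∑ j, h (v.1 j) < ∑ j : Fin n, ((l:ℝ)⁻¹ * ∑ i, g (v.1 j, v.2 i) + ε₂) := by
      apply Finset.sum_lt_sum_of_nonempty (Finset.univ_nonempty)
      intro j _
      linarith [hvj' j]
    have hsum_eq : ∑ j : Fin n, ((l:ℝ)⁻¹ * ∑ i, g (v.1 j, v.2 i) + ε₂)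
        = (l:ℝ)⁻¹ * (∑ j : Fin n, ∑ i : Fin l, g (v.1 j, v.2 i)) + (n:ℝ) * ε₂ := by
      rw [Finset.sum_add_distrib, ← Finset.mul_sum, Finset.sum_const, Finset.card_univ,
        Fintype.card_fin, nsmul_eq_mul]
    rw [hA_def]
    show m < (1 / ((n : ℝ) * l)) * ∑ j : Fin n, ∑ i : Fin l, g (v.1 j, v.2 i)
          + Real.sqrt (L / n) * ((Real.sqrt l + Real.sqrt n) / Real.sqrt l)
    rw [← hexcess]
    have key : m < (n:ℝ)⁻¹ * ((l:ℝ)⁻¹ * (∑ j : Fin n, ∑ i : Fin l, g (v.1 j, v.2 i))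
        + (n:ℝ) * ε₂) + ε₁ := by
      have h5 : (n:ℝ)⁻¹ * ∑ j, h (v.1 j)
          < (n:ℝ)⁻¹ * ((l:ℝ)⁻¹ * (∑ j : Fin n, ∑ i : Fin l, g (v.1 j, v.2 i)) + (n:ℝ) * ε₂) := by
        rw [← hsum_eq]
        exact mul_lt_mul_of_pos_left hsumlt (by positivity)
      linarith
    have harith : (n:ℝ)⁻¹ * ((l:ℝ)⁻¹ * (∑ j : Fin n, ∑ i : Fin l, g (v.1 j, v.2 i))
        + (n:ℝ) * ε₂) = (1 / ((n : ℝ) * l)) * (∑ j : Fin n, ∑ i : Fin l, g (v.1 j, v.2 i)) + ε₂ := by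
      field_simp
    rw [harith] at key
    linarith
  -- transfer to Ω
  set G : Ω → (Fin n → S) × (Fin l → T) :=
    fun ω => (fun j => X j ω, fun i => W i ω) with hG_def
  have hG_meas : Measurable G :=
    (measurable_pi_lambda _ hXm).prodMk (measurable_pi_lambda _ hWm)
  have hlaw : Measure.map G ℙ = PP :=
    joint_law μ ν n l X W hXm hWm hXlaw hWlaw hindep
  have hE : {ω | ∫ x, ∫ w, g (x, w) ∂ν ∂μ <
          (1 / ((n : ℝ) * l)) * ∑ j : Fin n, ∑ i : Fin l, g (X j ω, W i ω)
          + Real.sqrt (Real.log (((n : ℝ) + 1) / δ) / n)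
              * ((Real.sqrt l + Real.sqrt n) / Real.sqrt l)} = G ⁻¹' A := rfl
  rw [hE, ← Measure.map_apply hG_meas hA_meas, hlaw]
  -- conclude
  have hcompl : PP Badᶜ ≤ PP A := measure_mono hsubset
  have hPPBadc : PP Badᶜ = 1 - PP Bad := prob_compl_eq_one_sub hBad_meas
  have hofReal : ENNReal.ofReal (1 - δ) ≤ 1 - ENNReal.ofReal δ := by
    have hsum : ENNReal.ofReal (1 - δ) + ENNReal.ofReal δ = 1 := by
      rw [← ENNReal.ofReal_add (by linarith) hδ0.le]
      norm_num
    rw [← hsum]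
    have hne : ENNReal.ofReal δ ≠ ⊤ := ENNReal.ofReal_ne_top
    rw [ENNReal.add_sub_cancel_right hne]
  calc ENNReal.ofReal (1 - δ) ≤ 1 - ENNReal.ofReal δ := hofReal
    _ ≤ 1 - PP Bad := tsub_le_tsub_left hBad_bound 1
    _ = PP Badᶜ := hPPBadc.symm
    _ ≤ PP A := hcompl
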